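/- (Dimension-free inverse bound.) Let 𝒯 be a tree satisfying the geometric decay condition with parameter 0 < ρ < 1, let 0 < τ ≤ 1, α > 0, and 1/τ = α + 1/p. Suppose f = Σ_{Ω∈𝒯} ψ_Ω (the telescopic wavelet expansion). Then |f|^τ_{B̃_τ^{α,1}(𝒯)} ≤ C(α, τ, ρ) · N_τ(f,𝒯)^τ, where C does not depend on the ambient dimension n. -/

import Mathlib

open MeasureTheory
open scoped ENNReal

/-- The mean `E⃗_Ω` of `f` over `Ω`. -/
noncomputable def cellMean {n d : ℕ} (f : (Fin n → ℝ) → EuclideanSpace ℝ (Fin d))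
    (Ω : Set (Fin n → ℝ)) : EuclideanSpace ℝ (Fin d) := ⨍ x in Ω, f x

/-- The `τ`-th power of the averaged-modulus Besov semi-norm
`|f|_{B̃_τ^{α,1}(𝒯)} = (Σ_{Ω∈𝒯} (|Ω|^{-α} w₁(f,Ω)_τ)^τ)^{1/τ}`, where
`w₁(f,Ω)_τ^τ = ∫_Ω ‖f - E⃗_Ω‖_{ℓ₂}^τ`; node `(l,j)` is the `j`-th cell at level `l`. -/
noncomputable def besovTildeTau {n d : ℕ} (α τ : ℝ)
    (f : (Fin n → ℝ) → EuclideanSpace ℝ (Fin d))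
    (cells : ℕ → ℕ → Set (Fin n → ℝ)) : ℝ≥0∞ :=
  ∑' (l : ℕ) (j : ℕ), volume (cells l j) ^ (-(α * τ)) *
    ∫⁻ x in cells l j, (‖f x - cellMean f (cells l j)‖₊ : ℝ≥0∞) ^ τ

/-- The `τ`-th power of the tree sparsity `N_τ(f,𝒯) = (Σ_{Ω'≠Ω₀} ‖ψ_{Ω'}‖_p^τ)^{1/τ}`, where
`‖ψ_{Ω'}‖_p^τ = ‖E⃗_{Ω'} - E⃗_Ω‖_{ℓ₂}^τ |Ω'|^{τ/p}` (`Ω` the parent of `Ω'`); the cells at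
level `l+1` with index `j` have parent `(l, j/2)`. -/
noncomputable def sparsityTau {n d : ℕ} (τ p : ℝ)
    (f : (Fin n → ℝ) → EuclideanSpace ℝ (Fin d))
    (cells : ℕ → ℕ → Set (Fin n → ℝ)) : ℝ≥0∞ :=
  ∑' (l : ℕ) (j : ℕ),
    (‖cellMean f (cells (l + 1) j) - cellMean f (cells l (j / 2))‖₊ : ℝ≥0∞) ^ τ *
      volume (cells (l + 1) j) ^ (τ / p)

/-- The piecewise-constant wavelet of the node `(l, j)`:
`ψ_{Ω₀} = 1_{Ω₀} E⃗_{Ω₀}` at the root, and `ψ_{Ω'} = 1_{Ω'}(E⃗_{Ω'} - E⃗_Ω)` for a child `Ω'`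
of `Ω`. -/
noncomputable def treeWavelet {n d : ℕ} (f : (Fin n → ℝ) → EuclideanSpace ℝ (Fin d))
    (cells : ℕ → ℕ → Set (Fin n → ℝ)) :
    ℕ → ℕ → (Fin n → ℝ) → EuclideanSpace ℝ (Fin d)
  | 0, j => (cells 0 j).indicator fun _ => cellMean f (cells 0 j)
  | (l + 1), j => (cells (l + 1) j).indicator
      fun _ => cellMean f (cells (l + 1) j) - cellMean f (cells l (j / 2))

theorem ennreal_tsum_rpow_le {ι : Type*} (a : ι → ℝ≥0∞) {τ : ℝ} (h0 : 0 < τ) (h1 : τ ≤ 1) :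
    (∑' i, a i) ^ τ ≤ ∑' i, a i ^ τ := by
  have hmono : Monotone fun x : ℝ≥0∞ => x ^ τ := fun x y h => ENNReal.rpow_le_rpow h h0.le
  rw [ENNReal.tsum_eq_iSup_sum,
    hmono.map_iSup_of_continuousAt (ENNReal.continuous_rpow_const.continuousAt)
      (by simp [ENNReal.zero_rpow_of_pos h0])]
  refine iSup_le fun s => ?_
  refine le_trans ?_ (ENNReal.sum_le_tsum s)
  induction s using Finset.cons_induction with
  | empty => simp [ENNReal.zero_rpow_of_pos h0]
  | cons i s hi ih =>
    rw [Finset.sum_cons, Finset.sum_cons]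
    exact le_trans (ENNReal.rpow_add_le_add_rpow _ _ h0.le h1) (by gcongr)

theorem hasSum_nnnorm_le' {ι : Type*} {E : Type*} [NormedAddCommGroup E]
    {g : ι → E} {a : E} (hg : HasSum g a) :
    (‖a‖₊ : ℝ≥0∞) ≤ ∑' i, (‖g i‖₊ : ℝ≥0∞) := by
  by_cases hS : ∑' i, (‖g i‖₊ : ℝ≥0∞) = ⊤
  · simp [hS]
  · have hsum : Summable fun i => ‖g i‖₊ := by
      rwa [← ENNReal.tsum_coe_ne_top_iff_summable]
    rw [← ENNReal.coe_tsum hsum, ← hg.tsum_eq]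
    exact_mod_cast nnnorm_tsum_le hsum

section
variable {n d : ℕ} (f : (Fin n → ℝ) → EuclideanSpace ℝ (Fin d))
  (cells : ℕ → ℕ → Set (Fin n → ℝ))

theorem child_subset
    (hunion : ∀ l j, cells (l + 1) (2 * j) ∪ cells (l + 1) (2 * j + 1) = cells l j)
    (l j : ℕ) : cells (l + 1) j ⊆ cells l (j / 2) := by
  rcases Nat.even_or_odd j with ⟨m, hm⟩ | ⟨m, hm⟩
  · have h2 : j = 2 * m := by omega
    have hd : j / 2 = m := by omega
    rw [hd, h2, ← hunion l m]; exact Set.subset_union_left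
  · have hd : j / 2 = m := by omega
    rw [hd, hm, ← hunion l m]; exact Set.subset_union_right

theorem anc_subset
    (hunion : ∀ l j, cells (l + 1) (2 * j) ∪ cells (l + 1) (2 * j + 1) = cells l j)
    (k : ℕ) : ∀ l j, cells (l + k) j ⊆ cells l (j / 2 ^ k) := by
  induction k with
  | zero => intro l j; simp
  | succ k ih =>
    intro l j
    have h1 : cells (l + (k + 1)) j ⊆ cells (l + 1) (j / 2 ^ k) := by
      have := ih (l + 1) j
      rwa [show l + 1 + k = l + (k + 1) by omega] at this
    refine h1.trans ((child_subset cells hunion l _).trans ?_)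
    rw [Nat.div_div_eq_div_mul, ← pow_succ]

theorem level_disjoint
    (hroot : ∀ j, j ≠ 0 → cells 0 j = ∅)
    (hunion : ∀ l j, cells (l + 1) (2 * j) ∪ cells (l + 1) (2 * j + 1) = cells l j)
    (hdisj : ∀ l j, Disjoint (cells (l + 1) (2 * j)) (cells (l + 1) (2 * j + 1)))
    (l : ℕ) : ∀ j j', j ≠ j' → Disjoint (cells l j) (cells l j') := by
  induction l with
  | zero =>
    intro j j' h
    rcases eq_or_ne j 0 with rfl | hj
    · rw [hroot j' (Ne.symm h)]; exact disjoint_bot_right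
    · rw [hroot j hj]; exact disjoint_bot_left
  | succ l ih =>
    intro j j' h
    rcases eq_or_ne (j / 2) (j' / 2) with he | hne
    · rcases Nat.lt_or_ge j j' with hlt | hge
      · have hj : j = 2 * (j / 2) := by omega
        have hj' : j' = 2 * (j / 2) + 1 := by omega
        rw [hj, hj']; exact hdisj l (j / 2)
      · have hj' : j' = 2 * (j / 2) := by omega
        have hj : j = 2 * (j / 2) + 1 := by omega
        rw [hj, hj']; exact (hdisj l (j / 2)).symm
    · exact Set.disjoint_of_subset (child_subset cells hunion l j)
        (child_subset cells hunion l j') (ih _ _ hne)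

theorem vol_chain (μ : Measure (Fin n → ℝ)) (R : ℝ≥0∞)
    (hvol : ∀ l j, μ (cells (l + 1) j) ≤ R * μ (cells l (j / 2))) :
    ∀ k l j, μ (cells (l + k) j) ≤ R ^ k * μ (cells l (j / 2 ^ k)) := by
  intro k
  induction k with
  | zero => intro l j; simp
  | succ k ih =>
    intro l j
    calc μ (cells (l + (k + 1)) j) = μ (cells (l + 1 + k) j) := by
          rw [show l + (k + 1) = l + 1 + k by omega]
      _ ≤ R ^ k * μ (cells (l + 1) (j / 2 ^ k)) := ih (l + 1) j
      _ ≤ R ^ k * (R * μ (cells l (j / 2 ^ k / 2))) := by gcongr; exact hvol l (j / 2 ^ k)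
      _ = R ^ (k + 1) * μ (cells l (j / 2 ^ (k + 1))) := by
          rw [Nat.div_div_eq_div_mul, ← pow_succ]; ring

theorem wavelet_zero (m j : ℕ) (x : Fin n → ℝ) (hx : x ∉ cells m j) :
    treeWavelet f cells m j x = 0 := by
  cases m <;> simp [treeWavelet, Set.indicator_of_notMem hx]

theorem wavelet_telescope
    (hunion : ∀ l j, cells (l + 1) (2 * j) ∪ cells (l + 1) (2 * j + 1) = cells l j) :
    ∀ l j, ∀ x ∈ cells l j,
      (∑ m ∈ Finset.range (l + 1), treeWavelet f cells m (j / 2 ^ (l - m)) x) =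
        cellMean f (cells l j) := by
  intro l
  induction l with
  | zero =>
    intro j x hx
    simp [treeWavelet, Set.indicator_of_mem hx]
  | succ l ih =>
    intro j x hx
    have hx' : x ∈ cells l (j / 2) := child_subset cells hunion l j hx
    rw [Finset.sum_range_succ]
    have hcongr : ∀ m ∈ Finset.range (l + 1),
        treeWavelet f cells m (j / 2 ^ (l + 1 - m)) x =
        treeWavelet f cells m (j / 2 / 2 ^ (l - m)) x := by
      intro m hm
      rw [Finset.mem_range] at hm
      have h1 : l + 1 - m = (l - m) + 1 := by omega
      rw [Nat.div_div_eq_div_mul, ← pow_succ', h1]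
    rw [Finset.sum_congr rfl hcongr, ih (j / 2) x hx']
    have hlast : treeWavelet f cells (l + 1) (j / 2 ^ (l + 1 - (l + 1))) x =
        cellMean f (cells (l + 1) j) - cellMean f (cells l (j / 2)) := by
      simp only [Nat.sub_self, pow_zero, Nat.div_one]
      simp [treeWavelet, Set.indicator_of_mem hx]
    rw [hlast]
    abel

theorem head_hasSum
    (hroot : ∀ j, j ≠ 0 → cells 0 j = ∅)
    (hunion : ∀ l j, cells (l + 1) (2 * j) ∪ cells (l + 1) (2 * j + 1) = cells l j)
    (hdisj : ∀ l j, Disjoint (cells (l + 1) (2 * j)) (cells (l + 1) (2 * j + 1)))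
    (l j : ℕ) (x : Fin n → ℝ) (hx : x ∈ cells l j) :
    HasSum (fun q : ℕ × ℕ => if q.1 ≤ l then treeWavelet f cells q.1 q.2 x else 0)
      (cellMean f (cells l j)) := by
  classical
  set s : Finset (ℕ × ℕ) := (Finset.range (l + 1)).image fun m => (m, j / 2 ^ (l - m)) with hs
  have hzero : ∀ q : ℕ × ℕ, q ∉ s →
      (if q.1 ≤ l then treeWavelet f cells q.1 q.2 x else 0) = 0 := by
    intro q hq
    by_cases hql : q.1 ≤ l
    · rw [if_pos hql]
      apply wavelet_zero
      intro hxq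
      have hmem : (q.1, j / 2 ^ (l - q.1)) ∈ s :=
        Finset.mem_image_of_mem _ (Finset.mem_range.mpr (by omega))
      have hne : q.2 ≠ j / 2 ^ (l - q.1) := by
        intro h
        exact hq (by rw [show q = (q.1, j / 2 ^ (l - q.1)) from Prod.ext rfl h]; exact hmem)
      have hx' : x ∈ cells q.1 (j / 2 ^ (l - q.1)) := by
        have hsub := anc_subset cells hunion (l - q.1) q.1 j
        rw [show q.1 + (l - q.1) = l from by omega] at hsub
        exact hsub hx
      exact Set.disjoint_left.mp
        (level_disjoint cells hroot hunion hdisj q.1 q.2 _ hne) hxq hx'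
    · rw [if_neg hql]
  have hsum : HasSum _ _ := hasSum_sum_of_ne_finset_zero hzero
  have hval : (∑ q ∈ s, if q.1 ≤ l then treeWavelet f cells q.1 q.2 x else 0) =
      cellMean f (cells l j) := by
    rw [hs, Finset.sum_image (by intro a _ b _ hab; exact (Prod.mk.injEq _ _ _ _ ▸ hab : _ ∧ _).1)]
    rw [← wavelet_telescope f cells hunion l j x hx]
    refine Finset.sum_congr rfl fun m hm => ?_
    rw [Finset.mem_range] at hm
    exact if_pos (by omega)
  rwa [hval] at hsum

theorem pointwise_bound {τ : ℝ} (h0 : 0 < τ) (h1 : τ ≤ 1)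
    (hroot : ∀ j, j ≠ 0 → cells 0 j = ∅)
    (hunion : ∀ l j, cells (l + 1) (2 * j) ∪ cells (l + 1) (2 * j + 1) = cells l j)
    (hdisj : ∀ l j, Disjoint (cells (l + 1) (2 * j)) (cells (l + 1) (2 * j + 1)))
    (l j : ℕ) (x : Fin n → ℝ) (hx : x ∈ cells l j)
    (htot : HasSum (fun q : ℕ × ℕ => treeWavelet f cells q.1 q.2 x) (f x)) :
    (‖f x - cellMean f (cells l j)‖₊ : ℝ≥0∞) ^ τ ≤
      ∑' q : ℕ × ℕ, if q.1 ≤ l then 0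
        else (‖treeWavelet f cells q.1 q.2 x‖₊ : ℝ≥0∞) ^ τ := by
  have htail := htot.sub (head_hasSum f cells hroot hunion hdisj l j x hx)
  have heq : (fun q : ℕ × ℕ => treeWavelet f cells q.1 q.2 x -
      if q.1 ≤ l then treeWavelet f cells q.1 q.2 x else 0) =
      fun q : ℕ × ℕ => if q.1 ≤ l then 0 else treeWavelet f cells q.1 q.2 x := by
    funext q; split <;> simp
  rw [heq] at htail
  calc (‖f x - cellMean f (cells l j)‖₊ : ℝ≥0∞) ^ τ
      ≤ (∑' q : ℕ × ℕ, (‖if q.1 ≤ l then (0 : EuclideanSpace ℝ (Fin d))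
          else treeWavelet f cells q.1 q.2 x‖₊ : ℝ≥0∞)) ^ τ :=
        ENNReal.rpow_le_rpow (hasSum_nnnorm_le' htail) h0.le
    _ ≤ ∑' q : ℕ × ℕ, (‖if q.1 ≤ l then (0 : EuclideanSpace ℝ (Fin d))
          else treeWavelet f cells q.1 q.2 x‖₊ : ℝ≥0∞) ^ τ :=
        ennreal_tsum_rpow_le _ h0 h1
    _ = ∑' q : ℕ × ℕ, if q.1 ≤ l then 0
          else (‖treeWavelet f cells q.1 q.2 x‖₊ : ℝ≥0∞) ^ τ := by
        refine tsum_congr fun q => ?_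
        split <;> simp [ENNReal.zero_rpow_of_pos h0]

end

set_option maxHeartbeats 1000000 in
/-- Dimension-free inverse bound: for a tree with geometric decay parameter `ρ`, `0 < τ ≤ 1`,
`1/τ = α + 1/p`, and `f = Σ_{Ω∈𝒯} ψ_Ω` (the telescopic wavelet expansion),
`|f|^τ_{B̃_τ^{α,1}(𝒯)} ≤ C(α,τ,ρ) N_τ(f,𝒯)^τ` with `C` independent of the ambient dimension. -/
theorem stmt_9 (ρ α p τ : ℝ) (hρ0 : 0 < ρ) (hρ1 : ρ < 1) (hα : 0 < α) (hp : 0 < p)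
    (hτ0 : 0 < τ) (hτ1 : τ ≤ 1) (hτ : 1 / τ = α + 1 / p) :
    ∃ C : ℝ, 0 < C ∧
      ∀ (n d : ℕ) (cells : ℕ → ℕ → Set (Fin n → ℝ))
        (f : (Fin n → ℝ) → EuclideanSpace ℝ (Fin d)),
        (∀ l j, MeasurableSet (cells l j)) →
        (∀ j, j ≠ 0 → cells 0 j = ∅) →
        (∀ l j, cells (l + 1) (2 * j) ∪ cells (l + 1) (2 * j + 1) = cells l j) →
        (∀ l j, Disjoint (cells (l + 1) (2 * j)) (cells (l + 1) (2 * j + 1))) →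
        (∀ l j, volume (cells (l + 1) j) ≤ ENNReal.ofReal ρ * volume (cells l (j / 2))) →
        volume (cells 0 0) < ⊤ →
        IntegrableOn f (cells 0 0) →
        (∀ x ∈ cells 0 0,
          HasSum (fun q : ℕ × ℕ => treeWavelet f cells q.1 q.2 x) (f x)) →
        besovTildeTau α τ f cells ≤ ENNReal.ofReal C * sparsityTau τ p f cells := by
  classical
  have hατ : (0:ℝ) < α * τ := by positivity
  have hρτ : ρ ^ (α * τ) < 1 := Real.rpow_lt_one hρ0.le hρ1 hατ
  have hρτ0 : (0:ℝ) < ρ ^ (α * τ) := Real.rpow_pos_of_pos hρ0 _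
  have h1s : (0:ℝ) < 1 - ρ ^ (α * τ) := by linarith
  refine ⟨(1 - ρ ^ (α * τ))⁻¹, inv_pos.mpr h1s, ?_⟩
  intro n d cells f hmeas hroot hunion hdisj hvol hfin _hint htot
  set r : ℝ≥0∞ := ENNReal.ofReal ρ ^ (α * τ) with hr
  have hr1 : r ≤ 1 := ENNReal.rpow_le_one (ENNReal.ofReal_le_one.mpr hρ1.le) hατ.le
  have hexp : α * τ + τ / p = 1 := by
    have h1 : τ * (1 / τ) = 1 := by field_simp
    calc α * τ + τ / p = τ * (α + 1 / p) := by ring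
      _ = τ * (1 / τ) := by rw [← hτ]
      _ = 1 := h1
  have hfin' : ∀ l j, volume (cells l j) < ⊤ := by
    intro l j
    have hsub := anc_subset cells hunion l 0 j
    rw [zero_add] at hsub
    rcases eq_or_ne (j / 2 ^ l) 0 with h0 | h0
    · rw [h0] at hsub
      exact lt_of_le_of_lt (measure_mono hsub) hfin
    · rw [hroot _ h0] at hsub
      exact lt_of_le_of_lt (measure_mono hsub) (by simp)
  have hx00 : ∀ l j, ∀ x ∈ cells l j, x ∈ cells 0 0 := by
    intro l j x hx
    have hsub := anc_subset cells hunion l 0 j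
    rw [zero_add] at hsub
    rcases eq_or_ne (j / 2 ^ l) 0 with h0 | h0
    · rw [h0] at hsub; exact hsub hx
    · rw [hroot _ h0] at hsub; exact absurd (hsub hx) (Set.notMem_empty x)
  set K' : ℕ × ℕ → ℝ≥0∞ := fun q =>
    (‖cellMean f (cells (q.1 - 1 + 1) q.2) - cellMean f (cells (q.1 - 1) (q.2 / 2))‖₊ : ℝ≥0∞) ^ τ
    with hK'
  have hind : ∀ (m' j : ℕ) (x : Fin n → ℝ),
      (‖treeWavelet f cells (m' + 1) j x‖₊ : ℝ≥0∞) ^ τ =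
      (cells (m' + 1) j).indicator (fun _ => K' (m' + 1, j)) x := by
    intro m' j x
    by_cases hx : x ∈ cells (m' + 1) j
    · rw [Set.indicator_of_mem hx]
      simp [treeWavelet, Set.indicator_of_mem hx, hK']
    · rw [Set.indicator_of_notMem hx, wavelet_zero f cells _ _ _ hx]
      simp [ENNReal.zero_rpow_of_pos hτ0]
  set G : ℕ → ℕ → ℕ × ℕ → ℝ≥0∞ := fun l j q =>
    volume (cells l j) ^ (-(α * τ)) *
      (if q.1 ≤ l then 0 else K' q * volume (cells q.1 q.2 ∩ cells l j)) with hG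
  -- Step A
  have stepA : ∀ l j, volume (cells l j) ^ (-(α * τ)) *
      (∫⁻ x in cells l j, (‖f x - cellMean f (cells l j)‖₊ : ℝ≥0∞) ^ τ) ≤
      ∑' q : ℕ × ℕ, G l j q := by
    intro l j
    rw [hG]
    simp only []
    rw [ENNReal.tsum_mul_left]
    refine mul_le_mul_right ?_ _
    have hptwise : ∀ x ∈ cells l j,
        (‖f x - cellMean f (cells l j)‖₊ : ℝ≥0∞) ^ τ ≤
        ∑' q : ℕ × ℕ,
          (if q.1 ≤ l then 0 else (cells q.1 q.2).indicator (fun _ => K' q) x) := by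
      intro x hx
      refine (pointwise_bound f cells hτ0 hτ1 hroot hunion hdisj l j x hx
        (htot x (hx00 l j x hx))).trans_eq ?_
      refine tsum_congr fun q => ?_
      obtain ⟨m, j2⟩ := q
      by_cases hql : m ≤ l
      · simp [hql]
      · rw [if_neg hql, if_neg hql]
        obtain ⟨m', rfl⟩ : ∃ m', m = m' + 1 := ⟨m - 1, by omega⟩
        exact hind m' j2 x
    calc ∫⁻ x in cells l j, (‖f x - cellMean f (cells l j)‖₊ : ℝ≥0∞) ^ τ
        ≤ ∫⁻ x in cells l j, ∑' q : ℕ × ℕ,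
            (if q.1 ≤ l then 0 else (cells q.1 q.2).indicator (fun _ => K' q) x) := by
          refine lintegral_mono_ae ?_
          filter_upwards [ae_restrict_mem (hmeas l j)] with x hx using hptwise x hx
      _ = ∑' q : ℕ × ℕ, ∫⁻ x in cells l j,
            (if q.1 ≤ l then 0 else (cells q.1 q.2).indicator (fun _ => K' q) x) := by
          refine lintegral_tsum fun q => ?_
          by_cases hql : q.1 ≤ l
          · simp only [if_pos hql]; exact aemeasurable_const
          · simp only [if_neg hql]
            exact (measurable_const.indicator (hmeas _ _)).aemeasurable
      _ = ∑' q : ℕ × ℕ,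
            (if q.1 ≤ l then 0 else K' q * volume (cells q.1 q.2 ∩ cells l j)) := by
          refine tsum_congr fun q => ?_
          by_cases hql : q.1 ≤ l
          · simp [hql]
          · simp only [if_neg hql]
            rw [lintegral_indicator (hmeas _ _), setLIntegral_const,
              Measure.restrict_apply (hmeas _ _)]
  -- Step C: fixed q
  set T : ℕ × ℕ → ℝ≥0∞ := fun q =>
    if q.1 = 0 then 0 else K' q * volume (cells q.1 q.2) ^ (τ / p) with hT
  have stepC : ∀ q : ℕ × ℕ, (∑' (l : ℕ) (j : ℕ), G l j q) ≤ (1 - r)⁻¹ * T q := by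
    intro q
    obtain ⟨m, j'⟩ := q
    have hinner : ∀ l, (∑' j : ℕ, G l j (m, j')) =
        if m ≤ l then 0 else G l (j' / 2 ^ (m - l)) (m, j') := by
      intro l
      by_cases hml : m ≤ l
      · rw [if_pos hml]
        simp [hG, hml]
      · rw [if_neg hml]
        refine tsum_eq_single _ fun j hj => ?_
        have hsub : cells m j' ⊆ cells l (j' / 2 ^ (m - l)) := by
          have := anc_subset cells hunion (m - l) l j'
          rwa [show l + (m - l) = m from by omega] at this
        have hd2 : Disjoint (cells m j') (cells l j) :=
          (level_disjoint cells hroot hunion hdisj l _ j (Ne.symm hj)).mono_left hsub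
        have hzero : cells m j' ∩ cells l j = ∅ :=
          Set.disjoint_iff_inter_eq_empty.mp hd2
        simp [hG, hml, hzero]
    calc (∑' (l : ℕ) (j : ℕ), G l j (m, j'))
        = ∑' l : ℕ, if m ≤ l then 0 else G l (j' / 2 ^ (m - l)) (m, j') :=
          tsum_congr hinner
      _ ≤ ∑' l : ℕ, if m ≤ l then 0
            else r ^ (m - l) * (K' (m, j') * volume (cells m j') ^ (τ / p)) := by
          refine ENNReal.tsum_le_tsum fun l => ?_
          by_cases hml : m ≤ l
          · simp [hml]
          · rw [if_neg hml, if_neg hml]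
            have hsub : cells m j' ⊆ cells l (j' / 2 ^ (m - l)) := by
              have := anc_subset cells hunion (m - l) l j'
              rwa [show l + (m - l) = m from by omega] at this
            rw [hG]
            simp only [if_neg hml]
            rw [Set.inter_eq_self_of_subset_left hsub]
            set A := volume (cells l (j' / 2 ^ (m - l))) with hA
            set V := volume (cells m j') with hV
            rcases eq_or_ne V 0 with hV0 | hV0
            · simp [hV0]
            have hVfin : V ≠ ⊤ := (hfin' m j').ne
            have hA0 : A ≠ 0 := by
              intro h
              exact hV0 (le_antisymm (h ▸ measure_mono hsub) zero_le)
            have hAfin : A ≠ ⊤ := (hfin' l _).ne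
            have hchain : V ≤ (ENNReal.ofReal ρ) ^ (m - l) * A := by
              have := vol_chain cells volume (ENNReal.ofReal ρ) hvol (m - l) l j'
              rwa [show l + (m - l) = m from by omega] at this
            have hVsplit : V = V ^ (α * τ) * V ^ (τ / p) := by
              rw [← ENNReal.rpow_add _ _ hV0 hVfin, hexp, ENNReal.rpow_one]
            have hrpow : V ^ (α * τ) ≤ r ^ (m - l) * A ^ (α * τ) := by
              calc V ^ (α * τ) ≤ ((ENNReal.ofReal ρ) ^ (m - l) * A) ^ (α * τ) :=
                    ENNReal.rpow_le_rpow hchain hατ.le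
                _ = r ^ (m - l) * A ^ (α * τ) := by
                    rw [ENNReal.mul_rpow_of_nonneg _ _ hατ.le]
                    congr 1
                    rw [← ENNReal.rpow_natCast (ENNReal.ofReal ρ) (m - l),
                      ← ENNReal.rpow_mul, mul_comm ((m - l : ℕ) : ℝ),
                      ENNReal.rpow_mul, ENNReal.rpow_natCast]
            have hAA : A ^ (-(α * τ)) * A ^ (α * τ) = 1 := by
              rw [← ENNReal.rpow_add _ _ hA0 hAfin, neg_add_cancel, ENNReal.rpow_zero]
            calc A ^ (-(α * τ)) * (K' (m, j') * V)
                = K' (m, j') * (A ^ (-(α * τ)) * (V ^ (α * τ) * V ^ (τ / p))) := by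
                  rw [← hVsplit]; ring
              _ ≤ K' (m, j') * (A ^ (-(α * τ)) *
                    ((r ^ (m - l) * A ^ (α * τ)) * V ^ (τ / p))) := by gcongr
              _ = (A ^ (-(α * τ)) * A ^ (α * τ)) *
                    (r ^ (m - l) * (K' (m, j') * V ^ (τ / p))) := by ring
              _ = r ^ (m - l) * (K' (m, j') * V ^ (τ / p)) := by rw [hAA, one_mul]
      _ ≤ (1 - r)⁻¹ * T (m, j') := by
          rcases eq_or_ne m 0 with rfl | hm0
          · simp
          · rw [hT]
            simp only [if_neg hm0]
            rw [tsum_eq_sum (s := Finset.range m)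
              (fun l hl => if_pos (by rw [Finset.mem_range] at hl; omega))]
            have h1 : ∑ l ∈ Finset.range m,
                (if m ≤ l then 0
                  else r ^ (m - l) * (K' (m, j') * volume (cells m j') ^ (τ / p))) =
                (∑ l ∈ Finset.range m, r ^ (m - l)) *
                  (K' (m, j') * volume (cells m j') ^ (τ / p)) := by
              rw [Finset.sum_mul]
              refine Finset.sum_congr rfl fun l hl => ?_
              rw [Finset.mem_range] at hl
              rw [if_neg (by omega)]
            rw [h1]
            refine mul_le_mul_left ?_ _
            have h2 : ∑ l ∈ Finset.range m, r ^ (m - l) =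
                ∑ i ∈ Finset.range m, r ^ (i + 1) := by
              rw [← Finset.sum_range_reflect]
              refine Finset.sum_congr rfl fun i hi => ?_
              rw [Finset.mem_range] at hi
              congr 1
              omega
            rw [h2]
            calc ∑ i ∈ Finset.range m, r ^ (i + 1)
                ≤ ∑ i ∈ Finset.range m, r ^ i := by
                  refine Finset.sum_le_sum fun i _ => ?_
                  rw [pow_succ]
                  exact mul_le_of_le_one_right' hr1
              _ ≤ ∑' i : ℕ, r ^ i := ENNReal.sum_le_tsum _
              _ = (1 - r)⁻¹ := ENNReal.tsum_geometric r
  -- Assemble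
  have hCr : (1 - r)⁻¹ = ENNReal.ofReal (1 - ρ ^ (α * τ))⁻¹ := by
    rw [hr, ENNReal.ofReal_rpow_of_pos hρ0]
    rw [← ENNReal.ofReal_one, ← ENNReal.ofReal_sub _ hρτ0.le,
      ENNReal.ofReal_inv_of_pos h1s]
  calc besovTildeTau α τ f cells
      ≤ ∑' (l : ℕ) (j : ℕ) (q : ℕ × ℕ), G l j q := by
        rw [besovTildeTau]
        exact ENNReal.tsum_le_tsum fun l => ENNReal.tsum_le_tsum fun j => stepA l j
    _ = ∑' (q : ℕ × ℕ) (l : ℕ) (j : ℕ), G l j q := by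
        rw [show (∑' (l : ℕ) (j : ℕ) (q : ℕ × ℕ), G l j q) =
            ∑' (l : ℕ) (q : ℕ × ℕ) (j : ℕ), G l j q from
          tsum_congr fun l => ENNReal.tsum_comm]
        exact ENNReal.tsum_comm
    _ ≤ ∑' q : ℕ × ℕ, (1 - r)⁻¹ * T q := ENNReal.tsum_le_tsum stepC
    _ = (1 - r)⁻¹ * ∑' q : ℕ × ℕ, T q := ENNReal.tsum_mul_left
    _ = (1 - r)⁻¹ * sparsityTau τ p f cells := by
        congr 1
        rw [ENNReal.tsum_prod', tsum_eq_zero_add' ENNReal.summable]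
        have h0 : (∑' j : ℕ, T (0, j)) = 0 := by simp [hT]
        rw [h0, zero_add, sparsityTau]
        refine tsum_congr fun l => tsum_congr fun j => ?_
        rw [hT, hK']
        simp
    _ = ENNReal.ofReal (1 - ρ ^ (α * τ))⁻¹ * sparsityTau τ p f cells := by rw [hCr]
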